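/- For every r ∈ (0,1), the complete elliptic integral satisfies 𝒦(r) = (π/2)·∏_{n=1}^∞ (1 + L(r,-n)), where L(r,-n) denotes the descending Landen sequence of r and the infinite product converges. -/

import Mathlib

/-- Descending Landen sequence: `descL r p = L(r,-p)`. -/
noncomputable def descL (r : ℝ) : ℕ → ℝ
  | 0 => r
  | p + 1 => (descL r p / (1 + Real.sqrt (1 - (descL r p) ^ 2))) ^ 2

/-- Ascending Landen sequence: `ascL r p = L(r,p)`. -/
noncomputable def ascL (r : ℝ) : ℕ → ℝ
  | 0 => r
  | p + 1 => 2 * Real.sqrt (ascL r p) / (1 + ascL r p)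

/-- Complete elliptic integral of the first kind. -/
noncomputable def ellK (r : ℝ) : ℝ :=
  ∫ x in (0:ℝ)..1, 1 / Real.sqrt ((1 - x ^ 2) * (1 - r ^ 2 * x ^ 2))


open Real Set MeasureTheory intervalIntegral


noncomputable def Fi (r x : ℝ) : ℝ := 1 / Real.sqrt ((1 - x ^ 2) * (1 - r ^ 2 * x ^ 2))

lemma ellK_eq (r : ℝ) : ellK r = ∫ x in (0:ℝ)..1, Fi r x := rfl

lemma Fi_nonneg (r x : ℝ) : 0 ≤ Fi r x := by
  unfold Fi; positivity

lemma Fi_measurable (r : ℝ) : Measurable (Fi r) :=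
  measurable_const.div ((Real.continuous_sqrt.comp (by continuity)).measurable)

lemma integrable_Fi {r : ℝ} (hr : r ∈ Set.Ico (0:ℝ) 1) :
    IntervalIntegrable (Fi r) volume 0 1 := by
  have hr2 : r ^ 2 < 1 := by nlinarith [hr.1, hr.2]
  have hg0 : IntervalIntegrable (fun x : ℝ => x ^ (-(1/2) : ℝ)) volume 0 1 :=
    intervalIntegral.intervalIntegrable_rpow' (by norm_num)
  have hg1 : IntervalIntegrable (fun x : ℝ => (1 - x) ^ (-(1/2) : ℝ)) volume 0 1 := by
    simpa using (hg0.comp_sub_left 1).symm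
  have hg : IntervalIntegrable
      (fun x : ℝ => (Real.sqrt (1 - r ^ 2))⁻¹ * (1 - x) ^ (-(1/2) : ℝ)) volume 0 1 :=
    hg1.const_mul _
  refine hg.mono_fun' (Fi_measurable r).aestronglyMeasurable ?_
  filter_upwards [MeasureTheory.ae_restrict_mem measurableSet_uIoc] with x hx
  rw [Set.uIoc_of_le (by norm_num : (0:ℝ) ≤ 1)] at hx
  rw [Real.norm_eq_abs, abs_of_nonneg (Fi_nonneg r x)]
  rcases eq_or_lt_of_le hx.2 with h1 | h1
  · subst h1
    simp [Fi, Real.zero_rpow]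
  · have hx1 : 0 < 1 - x := by linarith
    have hrx : 0 < 1 - r ^ 2 := by linarith
    have hB : 0 < (1 - r ^ 2) * (1 - x) := by positivity
    have e : (1 - x ^ 2) * (1 - r ^ 2 * x ^ 2) - (1 - r ^ 2) * (1 - x)
        = (1 - x) * (r ^ 2 * (1 - x ^ 2) + x * (1 - r ^ 2 * x ^ 2)) := by ring
    have hx2 : x ^ 2 ≤ 1 := by nlinarith [hx.1, hx.2]
    have e1 : 0 ≤ r ^ 2 * (1 - x ^ 2) := mul_nonneg (sq_nonneg r) (by linarith)
    have e2 : 0 ≤ x * (1 - r ^ 2 * x ^ 2) := by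
      apply mul_nonneg hx.1.le
      nlinarith [sq_nonneg r]
    have hBA : (1 - r ^ 2) * (1 - x) ≤ (1 - x ^ 2) * (1 - r ^ 2 * x ^ 2) := by nlinarith
    have key : Fi r x ≤ 1 / Real.sqrt ((1 - r ^ 2) * (1 - x)) := by
      unfold Fi
      exact one_div_le_one_div_of_le (Real.sqrt_pos.mpr hB) (Real.sqrt_le_sqrt hBA)
    refine key.trans_eq ?_
    rw [Real.sqrt_mul hrx.le, show (-(1/2) : ℝ) = -(1/2 : ℝ) by norm_num,
      Real.rpow_neg hx1.le, ← Real.sqrt_eq_rpow]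
    rw [one_div, mul_inv]

lemma Fi_continuousOn {r : ℝ} (hr : r ∈ Set.Ico (0:ℝ) 1) :
    ContinuousOn (Fi r) (Set.Ico (0:ℝ) 1) := by
  apply ContinuousOn.div continuousOn_const
  · exact (Real.continuous_sqrt.comp (by continuity)).continuousOn
  · intro x hx
    have hx2 : x ^ 2 < 1 := by nlinarith [hx.1, hx.2]
    have : 0 < (1 - x ^ 2) * (1 - r ^ 2 * x ^ 2) := by
      apply mul_pos (by linarith)
      nlinarith [sq_nonneg r, sq_nonneg x, hr.1, hr.2, sq_nonneg (r*x)]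
    exact (Real.sqrt_ne_zero'.mpr this)

lemma ellK_zero : ellK 0 = Real.pi / 2 := by
  have h : ellK 0 = ∫ x in (0:ℝ)..1, 1 / Real.sqrt (1 - x ^ 2) := by
    rw [ellK_eq]
    apply intervalIntegral.integral_congr
    intro x _
    simp [Fi]
  rw [h]
  have hint : IntervalIntegrable (fun x : ℝ => 1 / Real.sqrt (1 - x ^ 2)) volume 0 1 := by
    have hfi : (fun x : ℝ => 1 / Real.sqrt (1 - x ^ 2)) = Fi 0 := by
      funext x; simp [Fi]
    rw [hfi]
    exact integrable_Fi (by constructor <;> norm_num)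
  have := intervalIntegral.integral_eq_sub_of_hasDeriv_right
    (f := Real.arcsin) (f' := fun x => 1 / Real.sqrt (1 - x ^ 2)) (a := (0:ℝ)) (b := 1)
    (Real.continuous_arcsin.continuousOn) ?_ hint
  · rw [this, Real.arcsin_one, Real.arcsin_zero, sub_zero]
  · intro x hx
    rw [min_def, max_def] at hx
    norm_num at hx
    exact (Real.hasDerivAt_arcsin (by linarith [hx.1]) (by linarith [hx.2])).hasDerivWithinAt


section bounds
variable {s : ℝ} (hs : s ∈ Set.Ico (0:ℝ) 1)
include hs

lemma sq_lt_one' : s ^ 2 < 1 := by nlinarith [hs.1, hs.2]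

lemma ellK_lower : Real.pi / 2 ≤ ellK s := by
  rw [← ellK_zero, ellK_eq, ellK_eq]
  apply intervalIntegral.integral_mono_on (by norm_num)
    (integrable_Fi (by constructor <;> norm_num)) (integrable_Fi hs)
  intro x hx
  rcases eq_or_lt_of_le hx.2 with h1 | h1
  · subst h1; simp [Fi]
  · have hx2 : x ^ 2 < 1 := by nlinarith [hx.1, h1]
    unfold Fi
    apply one_div_le_one_div_of_le
    · apply Real.sqrt_pos.mpr
      apply mul_pos (by linarith)
      nlinarith [sq_nonneg (s*x), sq_lt_one' hs]
    · apply Real.sqrt_le_sqrt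
      nlinarith [sq_nonneg (s*x), sq_nonneg x, mul_nonneg (sq_nonneg s) (sq_nonneg x)]

lemma ellK_upper : ellK s ≤ (Real.sqrt (1 - s ^ 2))⁻¹ * (Real.pi / 2) := by
  have h2 := sq_lt_one' hs
  rw [← ellK_zero, ellK_eq, ellK_eq, ← intervalIntegral.integral_const_mul]
  apply intervalIntegral.integral_mono_on (by norm_num) (integrable_Fi hs)
    ((integrable_Fi (by constructor <;> norm_num)).const_mul _)
  intro x hx
  rcases eq_or_lt_of_le hx.2 with h1 | h1
  · subst h1; simp [Fi]
  · have hx2 : x ^ 2 < 1 := by nlinarith [hx.1, h1]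
    have hkey : Fi s x ≤ 1 / Real.sqrt ((1 - s ^ 2) * (1 - x ^ 2)) := by
      unfold Fi
      apply one_div_le_one_div_of_le
      · apply Real.sqrt_pos.mpr; apply mul_pos (by linarith) (by linarith)
      · apply Real.sqrt_le_sqrt
        nlinarith [mul_nonneg (sq_nonneg s) (sq_nonneg (1 - x ^ 2))]
    refine hkey.trans_eq ?_
    rw [Real.sqrt_mul (by linarith)]
    simp only [Fi, one_div, mul_inv]
    ring
end bounds


lemma landen_back {s : ℝ} (hs : s ∈ Set.Ioo (0:ℝ) 1) :
    2 * Real.sqrt ((s / (1 + Real.sqrt (1 - s ^ 2))) ^ 2)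
      / (1 + (s / (1 + Real.sqrt (1 - s ^ 2))) ^ 2) = s := by
  obtain ⟨h0, h1⟩ := hs
  set c := Real.sqrt (1 - s ^ 2) with hc
  have hs2 : s ^ 2 < 1 := by nlinarith
  have hc0 : 0 ≤ c := Real.sqrt_nonneg _
  have hc2 : c ^ 2 = 1 - s ^ 2 := Real.sq_sqrt (by linarith)
  have hd : 0 < 1 + c := by linarith
  have hq : Real.sqrt ((s / (1 + c)) ^ 2) = s / (1 + c) :=
    Real.sqrt_sq (by positivity)
  rw [hq]
  rw [div_eq_iff]
  · field_simp
    linear_combination (-1) * hc2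
  · have : 0 < (s / (1+c)) ^ 2 := by positivity
    positivity

lemma descL_mem {r : ℝ} (hr : r ∈ Set.Ioo (0:ℝ) 1) (p : ℕ) :
    descL r p ∈ Set.Ioo (0:ℝ) 1 := by
  induction p with
  | zero => exact hr
  | succ p ih =>
    obtain ⟨h0, h1⟩ := ih
    have hs2 : (descL r p) ^ 2 < 1 := by nlinarith
    have hc0 : 0 ≤ Real.sqrt (1 - (descL r p) ^ 2) := Real.sqrt_nonneg _
    constructor
    · show 0 < (descL r p / (1 + _)) ^ 2
      positivity
    · show (descL r p / (1 + _)) ^ 2 < 1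
      have hlt : descL r p / (1 + Real.sqrt (1 - (descL r p) ^ 2)) < 1 := by
        rw [div_lt_one (by linarith)]; linarith
      nlinarith [div_nonneg h0.le (by linarith : (0:ℝ) ≤ 1 + Real.sqrt (1 - (descL r p) ^ 2))]

lemma descL_succ_eq {r : ℝ} (hr : r ∈ Set.Ioo (0:ℝ) 1) (p : ℕ) :
    descL r p = 2 * Real.sqrt (descL r (p + 1)) / (1 + descL r (p + 1)) := by
  have h := landen_back (descL_mem hr p)
  show descL r p = 2 * Real.sqrt ((descL r p / (1 + Real.sqrt (1 - (descL r p) ^ 2))) ^ 2)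
      / (1 + (descL r p / (1 + Real.sqrt (1 - (descL r p) ^ 2))) ^ 2)
  exact h.symm

lemma descL_le_pow {r : ℝ} (hr : r ∈ Set.Ioo (0:ℝ) 1) (p : ℕ) :
    descL r p ≤ r ^ (p + 1) := by
  induction p with
  | zero => simp [descL]
  | succ p ih =>
    have hm := descL_mem hr p
    have hrle : descL r p ≤ r := by
      calc descL r p ≤ r ^ (p+1) := ih
        _ ≤ r := pow_le_of_le_one hr.1.le hr.2.le (by omega)
    have h1 : descL r (p + 1) ≤ (descL r p) ^ 2 := by
      show (descL r p / (1 + Real.sqrt (1 - (descL r p) ^ 2))) ^ 2 ≤ _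
      apply pow_le_pow_left₀ (div_nonneg hm.1.le (by positivity))
      apply div_le_self hm.1.le
      linarith [Real.sqrt_nonneg (1 - (descL r p) ^ 2)]
    calc descL r (p+1) ≤ (descL r p) ^ 2 := h1
      _ ≤ r ^ (p+1) * r := by nlinarith [hm.1, ih, pow_nonneg hr.1.le (p+1)]
      _ = r ^ (p+2) := by ring


set_option maxHeartbeats 2000000 in
lemma landen_step {k : ℝ} (hk : k ∈ Set.Ioo (0:ℝ) 1) :
    ellK (2 * Real.sqrt k / (1 + k)) = (1 + k) * ellK k := by
  obtain ⟨hk0, hk1⟩ := hk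
  have hsk : 0 < Real.sqrt k := Real.sqrt_pos.mpr hk0
  have hsk2 : (Real.sqrt k) ^ 2 = k := Real.sq_sqrt hk0.le
  have hsk1 : Real.sqrt k < 1 := by
    nlinarith [Real.sqrt_nonneg k]
  set r : ℝ := 2 * Real.sqrt k / (1 + k) with hrdef
  have hr0 : 0 < r := by positivity
  have hr1 : r < 1 := by
    rw [hrdef, div_lt_one (by linarith)]
    nlinarith [sq_nonneg (1 - Real.sqrt k)]
  have hr2 : r ^ 2 = 4 * k / (1 + k) ^ 2 := by
    rw [hrdef]; rw [div_pow]; rw [mul_pow]; rw [hsk2]; norm_num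
  -- the substitution map
  set φ : ℝ → ℝ := fun t => (1 + k) * t / (1 + k * t ^ 2) with hφdef
  set φ' : ℝ → ℝ := fun t => (1 + k) * (1 - k * t ^ 2) / (1 + k * t ^ 2) ^ 2 with hφ'def
  have hden : ∀ t : ℝ, 0 < 1 + k * t ^ 2 := fun t => by positivity
  have hφderiv : ∀ t : ℝ, HasDerivAt φ (φ' t) t := by
    intro t
    have h1 : HasDerivAt (fun t : ℝ => (1 + k) * t) (1 + k) t := by
      simpa using (hasDerivAt_id t).const_mul (1 + k)
    have h2 : HasDerivAt (fun t : ℝ => 1 + k * t ^ 2) (k * (2 * t)) t := by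
      simpa using ((hasDerivAt_pow 2 t).const_mul k).const_add 1
    have h3 := h1.div h2 (hden t).ne'
    convert h3 using 1
    show (1 + k) * (1 - k * t ^ 2) / (1 + k * t ^ 2) ^ 2 = _
    rw [div_eq_div_iff (by positivity) (by positivity)]
    ring
    all_goals rfl
  have hφcont : Continuous φ := by
    apply Continuous.div (by continuity) (by continuity)
    exact fun t => (hden t).ne'
  have hφ'cont : Continuous φ' := by
    apply Continuous.div (by continuity) (by continuity)
    exact fun t => pow_ne_zero _ (hden t).ne'
  have hφ0 : φ 0 = 0 := by simp [hφdef]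
  have hφ1 : φ 1 = 1 := by
    simp only [hφdef, one_pow, mul_one]
    rw [div_eq_one_iff_eq (by linarith)]
  have hφmem : ∀ t ∈ Set.Icc (0:ℝ) 1, t < 1 → φ t ∈ Set.Ico (0:ℝ) 1 := by
    intro t ht ht1
    constructor
    · have := hden t
      have : 0 ≤ (1 + k) * t := by nlinarith [ht.1]
      positivity
    · rw [div_lt_one (hden t)]
      have hkt : k * t < 1 := by nlinarith [ht.1]
      nlinarith [mul_pos (by linarith : (0:ℝ) < 1 - t) (by linarith : (0:ℝ) < 1 - k * t)]
  -- key integrand identity for t ∈ [0, 1)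
  have hkey : ∀ t ∈ Set.Icc (0:ℝ) 1, t < 1 →
      φ' t * Fi r (φ t) = (1 + k) * Fi k t := by
    intro t ht ht1
    have ht0 := ht.1
    have hkt : k * t ^ 2 < 1 := by nlinarith
    have hd := hden t
    have hA : 0 < (1 - t ^ 2) * (1 - k ^ 2 * t ^ 2) := by
      apply mul_pos (by nlinarith) (by nlinarith)
    have hq : 0 < (1 - k * t ^ 2) / (1 + k * t ^ 2) ^ 2 := by
      apply div_pos (by linarith) (by positivity)
    have h1 : (1 - (φ t) ^ 2) * (1 - r ^ 2 * (φ t) ^ 2)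
        = ((1 - t ^ 2) * (1 - k ^ 2 * t ^ 2)) * ((1 - k * t ^ 2) / (1 + k * t ^ 2) ^ 2) ^ 2 := by
      simp only [hφdef]
      rw [hr2]
      field_simp
      ring
    have h2 : Real.sqrt ((1 - (φ t) ^ 2) * (1 - r ^ 2 * (φ t) ^ 2))
        = Real.sqrt ((1 - t ^ 2) * (1 - k ^ 2 * t ^ 2))
          * ((1 - k * t ^ 2) / (1 + k * t ^ 2) ^ 2) := by
      rw [h1, Real.sqrt_mul hA.le, Real.sqrt_sq hq.le]
    simp only [Fi, h2, hφ'def]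
    have hsA : 0 < Real.sqrt ((1 - t ^ 2) * (1 - k ^ 2 * t ^ 2)) := Real.sqrt_pos.mpr hA
    rw [mul_div_assoc, one_div, one_div, mul_inv]
    rw [show (1 + k) * ((1 - k * t ^ 2) / (1 + k * t ^ 2) ^ 2) *
          ((Real.sqrt ((1 - t ^ 2) * (1 - k ^ 2 * t ^ 2)))⁻¹ *
            ((1 - k * t ^ 2) / (1 + k * t ^ 2) ^ 2)⁻¹)
        = (1 + k) * (((1 - k * t ^ 2) / (1 + k * t ^ 2) ^ 2) *
            ((1 - k * t ^ 2) / (1 + k * t ^ 2) ^ 2)⁻¹) *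
            (Real.sqrt ((1 - t ^ 2) * (1 - k ^ 2 * t ^ 2)))⁻¹ from by ring]
    rw [mul_inv_cancel₀ hq.ne', mul_one]
  -- substitution identity for c ∈ (0,1)
  have hsub : ∀ c ∈ Set.Ioo (0:ℝ) 1,
      (∫ x in (0:ℝ)..(φ c), Fi r x) = (1 + k) * ∫ t in (0:ℝ)..c, Fi k t := by
    intro c hc
    have hc0 := hc.1
    have hc1 := hc.2
    have huIcc : Set.uIcc (0:ℝ) c = Set.Icc 0 c := Set.uIcc_of_le hc0.le
    have himg : φ '' Set.uIcc (0:ℝ) c ⊆ Set.Ico (0:ℝ) 1 := by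
      rw [huIcc]
      rintro x ⟨t, ht, rfl⟩
      exact hφmem t ⟨ht.1, ht.2.trans hc1.le⟩ (lt_of_le_of_lt ht.2 hc1)
    have h := intervalIntegral.integral_comp_smul_deriv'
      (f := φ) (f' := φ') (g := Fi r) (a := (0:ℝ)) (b := c)
      (fun t _ => hφderiv t) hφ'cont.continuousOn
      ((Fi_continuousOn ⟨hr0.le, hr1⟩).mono himg)
    rw [hφ0] at h
    rw [← h, ← intervalIntegral.integral_const_mul]
    apply intervalIntegral.integral_congr
    intro t ht
    rw [huIcc] at ht
    have := hkey t ⟨ht.1, ht.2.trans hc1.le⟩ (lt_of_le_of_lt ht.2 hc1)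
    simpa [smul_eq_mul] using this
  -- integrability
  have hIr : IntervalIntegrable (Fi r) volume 0 1 := integrable_Fi ⟨hr0.le, hr1⟩
  have hIk : IntervalIntegrable (Fi k) volume 0 1 := integrable_Fi ⟨hk0.le, hk1⟩
  have hIoo : Set.Ioo (0:ℝ) 1 ∈ nhdsWithin (1:ℝ) (Set.Iio 1) :=
    Ioo_mem_nhdsLT_of_mem (by constructor <;> norm_num)
  have huIcc01 : Set.uIcc (0:ℝ) 1 = Set.Icc (0:ℝ) 1 := Set.uIcc_of_le (by norm_num)
  -- limit of LHS
  have hPr : ContinuousOn (fun y => ∫ x in (0:ℝ)..y, Fi r x) (Set.Icc (0:ℝ) 1) := by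
    rw [← huIcc01]
    exact intervalIntegral.continuousOn_primitive_interval' hIr Set.left_mem_uIcc
  have hPk : ContinuousOn (fun y => ∫ x in (0:ℝ)..y, Fi k x) (Set.Icc (0:ℝ) 1) := by
    rw [← huIcc01]
    exact intervalIntegral.continuousOn_primitive_interval' hIk Set.left_mem_uIcc
  have hφt : Filter.Tendsto φ (nhdsWithin 1 (Set.Iio 1)) (nhdsWithin 1 (Set.Icc (0:ℝ) 1)) := by
    rw [tendsto_nhdsWithin_iff]
    constructor
    · have := (hφcont.tendsto 1).mono_left (nhdsWithin_le_nhds (s := Set.Iio (1:ℝ)))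
      rwa [hφ1] at this
    · filter_upwards [hIoo] with c hc
      have := hφmem c ⟨hc.1.le, hc.2.le⟩ hc.2
      exact ⟨this.1, this.2.le⟩
  have hidt : Filter.Tendsto (fun c : ℝ => c) (nhdsWithin 1 (Set.Iio 1))
      (nhdsWithin 1 (Set.Icc (0:ℝ) 1)) := by
    rw [tendsto_nhdsWithin_iff]
    constructor
    · exact nhdsWithin_le_nhds
    · filter_upwards [hIoo] with c hc
      exact ⟨hc.1.le, hc.2.le⟩
  have h1lim : Filter.Tendsto (fun c => ∫ x in (0:ℝ)..(φ c), Fi r x)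
      (nhdsWithin 1 (Set.Iio 1)) (nhds (ellK r)) := by
    have := ((hPr 1 (by constructor <;> norm_num)).tendsto.comp hφt)
    simpa [ellK_eq, Function.comp_def] using this
  have h2lim : Filter.Tendsto (fun c => (1 + k) * ∫ t in (0:ℝ)..c, Fi k t)
      (nhdsWithin 1 (Set.Iio 1)) (nhds ((1 + k) * ellK k)) := by
    have := ((hPk 1 (by constructor <;> norm_num)).tendsto.comp hidt).const_mul (1 + k)
    simpa [ellK_eq] using this
  have h1lim' : Filter.Tendsto (fun c => ∫ x in (0:ℝ)..(φ c), Fi r x)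
      (nhdsWithin 1 (Set.Iio 1)) (nhds ((1 + k) * ellK k)) := by
    apply h2lim.congr'
    filter_upwards [hIoo] with c hc
    exact (hsub c hc).symm
  exact tendsto_nhds_unique h1lim h1lim'


lemma my_one_le_prod {f : ℕ → ℝ} (h1 : ∀ n, 1 ≤ f n) (s : Finset ℕ) :
    1 ≤ ∏ n ∈ s, f n :=
  Finset.prod_induction f (fun x => 1 ≤ x)
    (fun a b ha hb => by nlinarith) le_rfl (fun i _ => h1 i)

lemma my_prod_mono {f : ℕ → ℝ} (h1 : ∀ n, 1 ≤ f n) {s t : Finset ℕ} (hst : s ⊆ t) :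
    (∏ n ∈ s, f n) ≤ ∏ n ∈ t, f n := by
  rw [← Finset.prod_sdiff hst]
  have hp : 0 ≤ ∏ n ∈ s, f n := le_trans zero_le_one (my_one_le_prod h1 s)
  calc (∏ n ∈ s, f n) = 1 * ∏ n ∈ s, f n := (one_mul _).symm
    _ ≤ (∏ n ∈ t \ s, f n) * ∏ n ∈ s, f n :=
        mul_le_mul_of_nonneg_right (my_one_le_prod h1 _) hp


theorem ellK_eq_prod_descL (r : ℝ) (hr : r ∈ Set.Ioo (0:ℝ) 1) :
    Multipliable (fun n : ℕ => 1 + descL r (n + 1)) ∧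
      ellK r = Real.pi / 2 * ∏' n : ℕ, (1 + descL r (n + 1)) := by
  have hpi : (0:ℝ) < Real.pi / 2 := by positivity
  set f : ℕ → ℝ := fun n => 1 + descL r (n + 1) with hfdef
  have hf1 : ∀ n, 1 ≤ f n := fun n => by
    have := (descL_mem hr (n + 1)).1; simp only [hfdef]; linarith
  have hmemIco : ∀ p, descL r p ∈ Set.Ico (0:ℝ) 1 := fun p =>
    ⟨(descL_mem hr p).1.le, (descL_mem hr p).2⟩
  have hKpos : ∀ p, 0 < ellK (descL r p) := fun p =>
    lt_of_lt_of_le hpi (ellK_lower (hmemIco p))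
  -- partial product identity
  have prodK : ∀ N : ℕ,
      ellK r = (∏ n ∈ Finset.range N, f n) * ellK (descL r N) := by
    intro N
    induction N with
    | zero => simp [descL]
    | succ N ih =>
      rw [Finset.prod_range_succ]
      have hstep : ellK (descL r N) = f N * ellK (descL r (N + 1)) := by
        rw [descL_succ_eq hr N, landen_step (descL_mem hr (N + 1))]
      rw [ih, hstep]; ring
  -- descL tends to 0
  have hL0 : Filter.Tendsto (fun N => descL r N) Filter.atTop (nhds 0) := by
    have hpow : Filter.Tendsto (fun N : ℕ => r ^ (N + 1)) Filter.atTop (nhds 0) :=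
      (tendsto_pow_atTop_nhds_zero_of_lt_one hr.1.le hr.2).comp
        (Filter.tendsto_add_atTop_nat 1)
    exact tendsto_of_tendsto_of_tendsto_of_le_of_le tendsto_const_nhds hpow
      (fun N => (descL_mem hr N).1.le) (fun N => descL_le_pow hr N)
  -- ellK (descL r N) tends to π/2
  have hKlim : Filter.Tendsto (fun N => ellK (descL r N)) Filter.atTop
      (nhds (Real.pi / 2)) := by
    have hcont : Filter.Tendsto (fun N => (Real.sqrt (1 - (descL r N) ^ 2))⁻¹ * (Real.pi / 2))
        Filter.atTop (nhds (Real.pi / 2)) := by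
      have c1 : ContinuousAt (fun s : ℝ => (Real.sqrt (1 - s ^ 2))⁻¹ * (Real.pi / 2)) 0 := by
        apply ContinuousAt.mul _ continuousAt_const
        apply ContinuousAt.inv₀
        · exact (Real.continuous_sqrt.comp (by continuity)).continuousAt
        · simp
      have := c1.tendsto.comp hL0
      simpa [Function.comp_def] using this
    exact tendsto_of_tendsto_of_tendsto_of_le_of_le tendsto_const_nhds hcont
      (fun N => ellK_lower (hmemIco N)) (fun N => ellK_upper (hmemIco N))
  -- partial products converge
  have hPlim : Filter.Tendsto (fun N => ∏ n ∈ Finset.range N, f n) Filter.atTop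
      (nhds (ellK r / (Real.pi / 2))) := by
    have heq : ∀ N, (∏ n ∈ Finset.range N, f n) = ellK r / ellK (descL r N) := by
      intro N
      rw [prodK N, mul_div_assoc, div_self (hKpos N).ne', mul_one]
    simp only [heq]
    exact Filter.Tendsto.div tendsto_const_nhds hKlim hpi.ne'
  have hmonoN : Monotone (fun N => ∏ n ∈ Finset.range N, f n) := by
    intro a b hab
    exact my_prod_mono hf1 (Finset.range_subset_range.mpr hab)
  have hboundN : ∀ N, (∏ n ∈ Finset.range N, f n) ≤ ellK r / (Real.pi / 2) :=
    fun N => hmonoN.ge_of_tendsto hPlim N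
  -- multipliable
  have hmonoF : Monotone (fun s : Finset ℕ => ∏ n ∈ s, f n) := by
    intro s t hst
    exact my_prod_mono hf1 hst
  have hbddF : BddAbove (Set.range (fun s : Finset ℕ => ∏ n ∈ s, f n)) := by
    refine ⟨ellK r / (Real.pi / 2), ?_⟩
    rintro x ⟨s, rfl⟩
    obtain ⟨N, hN⟩ := s.exists_nat_subset_range
    exact le_trans (hmonoF hN) (hboundN N)
  have hHasProd : HasProd f (⨆ s : Finset ℕ, ∏ n ∈ s, f n) :=
    tendsto_atTop_ciSup hmonoF hbddF
  have hMult : Multipliable f := ⟨_, hHasProd⟩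
  refine ⟨hMult, ?_⟩
  have htprod : (∏' n, f n) = ellK r / (Real.pi / 2) :=
    tendsto_nhds_unique hMult.hasProd.tendsto_prod_nat hPlim
  rw [htprod, mul_comm, div_mul_cancel₀ _ hpi.ne']
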